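/- Let L : ℂ² ⊗ ℂ² →ₗ[ℂ] ℂ be a linear functional and define E : ℝ → ℂ by E(θ) = L((e₀ + exp(iθ)·e₁) ⊗ (e₀ + exp(−iθ)·e₁)). Then for every θ ∈ ℝ, E'(θ) = (1/2)·(E(θ + π/2) − E(θ − π/2)). (This is the two-term parameter-shift rule of Schuld et al., obtained as a special case of the diagrammatic differentiation of circuit expectations.) -/

import Mathlib

open scoped TensorProduct

noncomputable section

/-- `ℂ²` with standard basis vectors. -/
abbrev C2 : Type := ℂ × ℂ

def e0 : C2 := (1, 0)
def e1 : C2 := (0, 1)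

/-- the two-term parameter-shift rule of Schuld et al. -/
theorem parameter_shift_rule (L : C2 ⊗[ℂ] C2 →ₗ[ℂ] ℂ) (E : ℝ → ℂ)
    (hE : ∀ θ, E θ = L ((e0 + Complex.exp (Complex.I * (θ : ℂ)) • e1) ⊗ₜ[ℂ]
      (e0 + Complex.exp (-(Complex.I * (θ : ℂ))) • e1)))
    (θ : ℝ) :
    deriv E θ = (1 / 2) * (E (θ + Real.pi / 2) - E (θ - Real.pi / 2)) := by
  set A := L (e0 ⊗ₜ[ℂ] e0) with hA
  set B := L (e0 ⊗ₜ[ℂ] e1) with hB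
  set C := L (e1 ⊗ₜ[ℂ] e0) with hC
  set D := L (e1 ⊗ₜ[ℂ] e1) with hD
  have key : ∀ t : ℝ, E t = A + Complex.exp (-(Complex.I * t)) * B
      + Complex.exp (Complex.I * t) * C + D := by
    intro t
    rw [hE t]
    simp only [TensorProduct.add_tmul, TensorProduct.tmul_add, ← TensorProduct.smul_tmul',
      TensorProduct.tmul_smul, map_add, map_smul, smul_eq_mul, smul_smul]
    have h1 : Complex.exp (-(Complex.I * (t : ℂ))) * Complex.exp (Complex.I * t) = 1 := by
      rw [← Complex.exp_add]
      rw [show -(Complex.I * (t:ℂ)) + Complex.I * t = 0 by ring, Complex.exp_zero]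
    rw [hA, hB, hC, hD]
    linear_combination L (e1 ⊗ₜ[ℂ] e1) * h1
  have funE : E = fun t : ℝ => A + Complex.exp (-(Complex.I * t)) * B
      + Complex.exp (Complex.I * t) * C + D := funext key
  have hd : HasDerivAt E
      (-Complex.I * Complex.exp (-(Complex.I * θ)) * B
        + Complex.I * Complex.exp (Complex.I * θ) * C) θ := by
    rw [funE]
    have h1 : HasDerivAt (fun t : ℝ => Complex.exp (Complex.I * t))
        (Complex.I * Complex.exp (Complex.I * θ)) θ := by
      simpa [mul_comm] using
        (((hasDerivAt_id (θ : ℂ)).const_mul Complex.I).cexp).comp_ofReal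
    have h2 : HasDerivAt (fun t : ℝ => Complex.exp (-(Complex.I * t)))
        (-Complex.I * Complex.exp (-(Complex.I * θ))) θ := by
      simpa [mul_comm] using
        ((((hasDerivAt_id (θ : ℂ)).const_mul Complex.I).neg).cexp).comp_ofReal
    have h := (((h2.mul_const B).const_add A).add (h1.mul_const C)).add_const D
    exact h
    try ring
  have hexp : ∀ (z : ℂ) (s : ℝ), Complex.exp (z + (s : ℂ) * Complex.I)
      = Complex.exp z * (Real.cos s + Real.sin s * Complex.I) := by
    intro z s
    rw [Complex.exp_add, Complex.exp_mul_I, Complex.ofReal_cos, Complex.ofReal_sin]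
  have hp2 : Complex.exp (Complex.I * ((θ : ℂ) + Real.pi / 2))
      = Complex.I * Complex.exp (Complex.I * θ) := by
    rw [show Complex.I * ((θ : ℂ) + Real.pi / 2)
      = Complex.I * θ + ((Real.pi / 2 : ℝ) : ℂ) * Complex.I by push_cast; ring,
      hexp, Real.cos_pi_div_two, Real.sin_pi_div_two]
    push_cast; ring
  have hm2 : Complex.exp (Complex.I * ((θ : ℂ) - Real.pi / 2))
      = -Complex.I * Complex.exp (Complex.I * θ) := by
    rw [show Complex.I * ((θ : ℂ) - Real.pi / 2)
      = Complex.I * θ + ((-(Real.pi / 2) : ℝ) : ℂ) * Complex.I by push_cast; ring,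
      hexp, Real.cos_neg, Real.sin_neg, Real.cos_pi_div_two, Real.sin_pi_div_two]
    push_cast; ring
  have hp2' : Complex.exp (-(Complex.I * ((θ : ℂ) + Real.pi / 2)))
      = -Complex.I * Complex.exp (-(Complex.I * θ)) := by
    rw [show -(Complex.I * ((θ : ℂ) + Real.pi / 2))
      = -(Complex.I * θ) + ((-(Real.pi / 2) : ℝ) : ℂ) * Complex.I by push_cast; ring,
      hexp, Real.cos_neg, Real.sin_neg, Real.cos_pi_div_two, Real.sin_pi_div_two]
    push_cast; ring
  have hm2' : Complex.exp (-(Complex.I * ((θ : ℂ) - Real.pi / 2)))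
      = Complex.I * Complex.exp (-(Complex.I * θ)) := by
    rw [show -(Complex.I * ((θ : ℂ) - Real.pi / 2))
      = -(Complex.I * θ) + ((Real.pi / 2 : ℝ) : ℂ) * Complex.I by push_cast; ring,
      hexp, Real.cos_pi_div_two, Real.sin_pi_div_two]
    push_cast; ring
  rw [hd.deriv, key, key]
  push_cast
  rw [hp2, hm2, hp2', hm2']
  ring
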